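/- The endomorphisms T_i satisfy the far commutation relation: for all i, k with 1 ≤ i, k ≤ n−1 and |i − k| ≥ 2, T_i ∘ T_k = T_k ∘ T_i as endomorphisms of F. -/
import Mathlib


/-- The free group `F` on the `(d−1)(n−1)` generators `x_{i,j}`,
`i = 1,…,n−1`, `j = 1,…,d−1`. -/
abbrev Fgrp (n d : ℕ) : Type := FreeGroup (Fin (n - 1) × Fin (d - 1))

/-- The element `x_{k,j}` of `F`, with the second index read modulo `d`:
for `j ≡ 1,…,d−1 (mod d)` it is the corresponding generator, and for
`j ≡ 0 (mod d)` (i.e. `j = d`) it is `x_{k,d} := (x_{k,1}·x_{k,2}·…·x_{k,d−1})⁻¹`.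
(Junk value `1` outside the valid index ranges.) -/
def X (n d k j : ℕ) : Fgrp n d :=
  if hk : k - 1 < n - 1 then
    if j % d = 0 then
      ((List.ofFn fun b : Fin (d - 1) =>
        FreeGroup.of ((⟨k - 1, hk⟩ : Fin (n - 1)), b)).prod)⁻¹
    else if hj : j % d - 1 < d - 1 then
      FreeGroup.of ((⟨k - 1, hk⟩ : Fin (n - 1)), (⟨j % d - 1, hj⟩ : Fin (d - 1)))
    else 1
  else 1

/-- The element `y_{k,j} := x_{k,1}·x_{k,2}·…·x_{k,j−1}` of `F`. -/
def Y (n d k j : ℕ) : Fgrp n d :=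
  ((List.range (j - 1)).map fun t => X n d k (t + 1)).prod

/-- The endomorphism `T_i` of the free group `F`, defined on the generators
(with `1 ≤ k ≤ n−1`, `1 ≤ j ≤ d−1`) by
`x_{i−1,j} ↦ x_{i−1,j−1}⁻¹·…·x_{i−1,1}⁻¹·x_{i,j+1}·x_{i−1,1}·…·x_{i−1,j}`,
`x_{i,j} ↦ x_{i,2}·…·x_{i,j}·x_{i,j+1}⁻¹·x_{i,j}⁻¹·…·x_{i,2}⁻¹`,
`x_{i+1,j} ↦ x_{i,j−1}⁻¹·…·x_{i,1}⁻¹·x_{i+1,j}·x_{i,1}·…·x_{i,j}`,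
fixing all other generators. -/
def T (n d : ℕ) (i : ℕ) : Fgrp n d →* Fgrp n d :=
  FreeGroup.lift fun p =>
    let k := (p.1 : ℕ) + 1
    let j := (p.2 : ℕ) + 1
    if k + 1 = i then
      (Y n d k j)⁻¹ * X n d i (j + 1) * Y n d k (j + 1)
    else if k = i then
      (((List.range (j - 1)).map fun t => X n d i (t + 2)).prod) *
        (X n d i (j + 1))⁻¹ *
        (((List.range (j - 1)).map fun t => X n d i (t + 2)).prod)⁻¹
    else if k = i + 1 then
      (Y n d i j)⁻¹ * X n d k j * Y n d i (j + 1)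
    else
      FreeGroup.of p

lemma fix_of (n d i : ℕ) (p : Fin (n-1) × Fin (d-1)) (h1 : (p.1:ℕ)+1+1 ≠ i)
    (h2 : (p.1:ℕ)+1 ≠ i) (h3 : (p.1:ℕ)+1 ≠ i+1) : T n d i (FreeGroup.of p) = FreeGroup.of p := by
  have h3' : (p.1:ℕ) ≠ i := by omega
  simp [T, h1, h2, h3']

lemma fix_X (n d i r m : ℕ) (hr : 1 ≤ r) (h1 : r+1 ≠ i) (h2 : r ≠ i) (h3 : r ≠ i+1) :
    T n d i (X n d r m) = X n d r m := by
  have key : ∀ b : Fin (d-1), ∀ hk : r - 1 < n - 1,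
      T n d i (FreeGroup.of ((⟨r-1, hk⟩ : Fin (n-1)), b)) = FreeGroup.of ((⟨r-1, hk⟩ : Fin (n-1)), b) := by
    intro b hk
    apply fix_of <;> simp <;> omega
  unfold X
  split
  · split
    · rw [map_inv, map_list_prod, List.map_ofFn]
      refine congrArg _ (congrArg List.prod (congrArg List.ofFn (funext fun b => ?_)))
      exact key b _
    · split
      · exact key _ _
      · exact map_one _
  · exact map_one _

lemma fix_X_prod (n d i r : ℕ) (hr : 1 ≤ r) (h1 : r+1 ≠ i) (h2 : r ≠ i) (h3 : r ≠ i+1)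
    (L : List ℕ) (f : ℕ → ℕ) :
    T n d i ((L.map fun t => X n d r (f t)).prod) = (L.map fun t => X n d r (f t)).prod := by
  rw [map_list_prod, List.map_map]
  congr 1
  apply List.map_congr_left
  intro t _
  exact fix_X n d i r (f t) hr h1 h2 h3

lemma fix_Y (n d i r m : ℕ) (hr : 1 ≤ r) (h1 : r+1 ≠ i) (h2 : r ≠ i) (h3 : r ≠ i+1) :
    T n d i (Y n d r m) = Y n d r m := by
  unfold Y
  exact fix_X_prod n d i r hr h1 h2 h3 _ _

lemma X_eq_of (n d a b : ℕ) (ha : a < n-1) (hb : b < d-1) :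
    X n d (a+1) (b+1) = FreeGroup.of ((⟨a, ha⟩ : Fin (n-1)), (⟨b, hb⟩ : Fin (d-1))) := by
  have h1 : (b+1) % d = b+1 := Nat.mod_eq_of_lt (by omega)
  simp [X, h1, ha, hb]

lemma T_X_above (n d i b : ℕ) (ha : i < n-1) (hb : b < d-1) :
    T n d i (X n d (i+1) (b+1)) =
      (Y n d i (b+1))⁻¹ * X n d (i+1) (b+1) * Y n d i (b+2) := by
  have e1 : i + 1 + 1 ≠ i := by omega
  have e2 : i + 1 ≠ i := by omega
  rw [X_eq_of n d i b ha hb]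
  simp [T, e1, e2, X_eq_of n d i b ha hb]

lemma T_X_below (n d a b : ℕ) (ha : a < n-1) (hb : b < d-1) :
    T n d (a+2) (X n d (a+1) (b+1)) =
      (Y n d (a+1) (b+1))⁻¹ * X n d (a+2) (b+2) * Y n d (a+1) (b+2) := by
  rw [X_eq_of n d a b ha hb]
  simp [T]

lemma Y_one (n d r : ℕ) : Y n d r 1 = 1 := by simp [Y]
lemma Y_succ (n d r m : ℕ) : Y n d r (m+2) = Y n d r (m+1) * X n d r (m+1) := by
  simp [Y, List.range_succ]

lemma T_Y_telescope (n d i : ℕ) (ha : i < n-1) :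
    ∀ m, m ≤ d-1 → T n d i (Y n d (i+1) (m+1)) = Y n d (i+1) (m+1) * Y n d i (m+1) := by
  intro m
  induction m with
  | zero => intro _; rw [Y_one, Y_one]; simp
  | succ m ih =>
    intro hm
    rw [Y_succ, map_mul, ih (by omega), T_X_above n d i m ha (by omega)]
    simp only [Y_succ]
    group

lemma key (n d i k : ℕ) (hi1 : 1 ≤ i) (hik : i+2 ≤ k) (p : Fin (n-1) × Fin (d-1)) :
    T n d i (T n d k (FreeGroup.of p)) = T n d k (T n d i (FreeGroup.of p)) := by
  obtain ⟨⟨a, haa⟩, ⟨b, hbb⟩⟩ := p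
  by_cases h1 : a + 1 + 1 = i
  · -- row i-1
    have e1 : T n d i (FreeGroup.of ((⟨a,haa⟩ : Fin (n-1)), (⟨b,hbb⟩ : Fin (d-1)))) =
        (Y n d (a+1) (b+1))⁻¹ * X n d i (b+1+1) * Y n d (a+1) (b+1+1) := by
      simp [T, h1]
    have e2 : T n d k (FreeGroup.of ((⟨a,haa⟩ : Fin (n-1)), (⟨b,hbb⟩ : Fin (d-1)))) =
        FreeGroup.of ((⟨a,haa⟩ : Fin (n-1)), (⟨b,hbb⟩ : Fin (d-1))) :=
      fix_of n d k _ (by simp; omega) (by simp; omega) (by simp; omega)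
    rw [e2, e1, map_mul, map_mul, map_inv,
      fix_Y n d k (a+1) (b+1) (by omega) (by omega) (by omega) (by omega),
      fix_X n d k i (b+1+1) (by omega) (by omega) (by omega) (by omega),
      fix_Y n d k (a+1) (b+1+1) (by omega) (by omega) (by omega) (by omega)]
  · by_cases h2 : a + 1 = i
    · -- row i
      have e1 : T n d i (FreeGroup.of ((⟨a,haa⟩ : Fin (n-1)), (⟨b,hbb⟩ : Fin (d-1)))) =
          (((List.range b).map fun t => X n d i (t+2)).prod) * (X n d i (b+1+1))⁻¹ *
            (((List.range b).map fun t => X n d i (t+2)).prod)⁻¹ := by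
        simp [T, h1, h2]
      have e2 : T n d k (FreeGroup.of ((⟨a,haa⟩ : Fin (n-1)), (⟨b,hbb⟩ : Fin (d-1)))) =
          FreeGroup.of ((⟨a,haa⟩ : Fin (n-1)), (⟨b,hbb⟩ : Fin (d-1))) :=
        fix_of n d k _ (by simp; omega) (by simp; omega) (by simp; omega)
      rw [e2, e1, map_mul, map_mul, map_inv, map_inv,
        fix_X_prod n d k i (by omega) (by omega) (by omega) (by omega),
        fix_X n d k i (b+1+1) (by omega) (by omega) (by omega) (by omega)]
    · by_cases h3 : a + 1 = i + 1
      · -- row i+1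
        have hai : a = i := by omega
        subst hai
        have e1 : T n d a (FreeGroup.of ((⟨a,haa⟩ : Fin (n-1)), (⟨b,hbb⟩ : Fin (d-1)))) =
            (Y n d a (b+1))⁻¹ * X n d (a+1) (b+1) * Y n d a (b+1+1) := by
          simp [T, h1, h2]
        by_cases h4 : k = a + 2
        · -- hard case
          subst h4
          have e2 : T n d (a+2) (FreeGroup.of ((⟨a,haa⟩ : Fin (n-1)), (⟨b,hbb⟩ : Fin (d-1)))) =
              (Y n d (a+1) (b+1))⁻¹ * X n d (a+2) (b+1+1) * Y n d (a+1) (b+1+1) := by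
            simp [T]
          rw [e1, e2, map_mul, map_mul, map_inv, map_mul, map_mul, map_inv,
            T_Y_telescope n d a haa b (by omega),
            T_Y_telescope n d a haa (b+1) (by omega),
            fix_X n d a (a+2) (b+1+1) (by omega) (by omega) (by omega) (by omega),
            fix_Y n d (a+2) a (b+1) (by omega) (by omega) (by omega) (by omega),
            fix_Y n d (a+2) a (b+1+1) (by omega) (by omega) (by omega) (by omega),
            T_X_below n d a b haa hbb]
          group
        · -- k ≥ a+3, T k fixes everything
          have e2 : T n d k (FreeGroup.of ((⟨a,haa⟩ : Fin (n-1)), (⟨b,hbb⟩ : Fin (d-1)))) =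
              FreeGroup.of ((⟨a,haa⟩ : Fin (n-1)), (⟨b,hbb⟩ : Fin (d-1))) :=
            fix_of n d k _ (by simp; omega) (by simp; omega) (by simp; omega)
          rw [e2, e1, map_mul, map_mul, map_inv,
            fix_Y n d k a (b+1) (by omega) (by omega) (by omega) (by omega),
            fix_X n d k (a+1) (b+1) (by omega) (by omega) (by omega) (by omega),
            fix_Y n d k a (b+1+1) (by omega) (by omega) (by omega) (by omega)]
      · -- T i fixes of p
        have e1 : T n d i (FreeGroup.of ((⟨a,haa⟩ : Fin (n-1)), (⟨b,hbb⟩ : Fin (d-1)))) =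
            FreeGroup.of ((⟨a,haa⟩ : Fin (n-1)), (⟨b,hbb⟩ : Fin (d-1))) :=
          fix_of n d i _ (by simp; omega) (by simp; omega) (by simp; omega)
        rw [e1]
        by_cases h4 : a + 1 + 1 = k
        · -- row k-1, with a+1 ≥ i+2
          have e2 : T n d k (FreeGroup.of ((⟨a,haa⟩ : Fin (n-1)), (⟨b,hbb⟩ : Fin (d-1)))) =
              (Y n d (a+1) (b+1))⁻¹ * X n d k (b+1+1) * Y n d (a+1) (b+1+1) := by
            simp [T, h4]
          rw [e2, map_mul, map_mul, map_inv,
            fix_Y n d i (a+1) (b+1) (by omega) (by omega) (by omega) (by omega),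
            fix_X n d i k (b+1+1) (by omega) (by omega) (by omega) (by omega),
            fix_Y n d i (a+1) (b+1+1) (by omega) (by omega) (by omega) (by omega)]
        · by_cases h5 : a + 1 = k
          · -- row k
            have e2 : T n d k (FreeGroup.of ((⟨a,haa⟩ : Fin (n-1)), (⟨b,hbb⟩ : Fin (d-1)))) =
                (((List.range b).map fun t => X n d k (t+2)).prod) * (X n d k (b+1+1))⁻¹ *
                  (((List.range b).map fun t => X n d k (t+2)).prod)⁻¹ := by
              simp [T, h4, h5]
            rw [e2, map_mul, map_mul, map_inv, map_inv,
              fix_X_prod n d i k (by omega) (by omega) (by omega) (by omega),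
              fix_X n d i k (b+1+1) (by omega) (by omega) (by omega) (by omega)]
          · by_cases h6 : a + 1 = k + 1
            · -- row k+1
              have e2 : T n d k (FreeGroup.of ((⟨a,haa⟩ : Fin (n-1)), (⟨b,hbb⟩ : Fin (d-1)))) =
                  (Y n d k (b+1))⁻¹ * X n d (a+1) (b+1) * Y n d k (b+1+1) := by
                have hak : a = k := by omega
                subst hak
                have f1 : ¬(a + 1 + 1 = a) := by omega
                have f2 : ¬(a + 1 = a) := by omega
                simp [T, f1, f2]
              rw [e2, map_mul, map_mul, map_inv,
                fix_Y n d i k (b+1) (by omega) (by omega) (by omega) (by omega),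
                fix_X n d i (a+1) (b+1) (by omega) (by omega) (by omega) (by omega),
                fix_Y n d i k (b+1+1) (by omega) (by omega) (by omega) (by omega)]
            · -- both fix
              have e2 : T n d k (FreeGroup.of ((⟨a,haa⟩ : Fin (n-1)), (⟨b,hbb⟩ : Fin (d-1)))) =
                  FreeGroup.of ((⟨a,haa⟩ : Fin (n-1)), (⟨b,hbb⟩ : Fin (d-1))) :=
                fix_of n d k _ (by simp; omega) (by simp; omega) (by simp; omega)
              have e1' : T n d i (FreeGroup.of ((⟨a,haa⟩ : Fin (n-1)), (⟨b,hbb⟩ : Fin (d-1)))) =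
                  FreeGroup.of ((⟨a,haa⟩ : Fin (n-1)), (⟨b,hbb⟩ : Fin (d-1))) :=
                fix_of n d i _ (by simp; omega) (by simp; omega) (by simp; omega)
              rw [e2, e1']

/-- The endomorphisms `T_i` satisfy the far commutation relation: for all
`i, k` with `1 ≤ i, k ≤ n−1` and `|i − k| ≥ 2`, `T_i ∘ T_k = T_k ∘ T_i`
as endomorphisms of `F`. -/
theorem T_far_commutation (n d : ℕ) (hn : 2 ≤ n) (hd : 2 ≤ d)
    (i k : ℕ) (hi1 : 1 ≤ i) (hi2 : i ≤ n - 1) (hk1 : 1 ≤ k) (hk2 : k ≤ n - 1)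
    (hik : i + 2 ≤ k ∨ k + 2 ≤ i) :
    (T n d i).comp (T n d k) = (T n d k).comp (T n d i) := by
  apply FreeGroup.ext_hom
  intro p
  simp only [MonoidHom.comp_apply]
  rcases hik with h | h
  · exact key n d i k hi1 h p
  · exact (key n d k i hk1 h p).symm
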